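/- Let G be a topological group and H ⊆ G a subgroup. Then the pair (G,H) is relatively extremely amenable if and only if there exists a universal compact Hausdorff G-space T and a point t₀ ∈ T such that h·t₀ = t₀ for every h ∈ H. -/

import Mathlib

/-- A topological group `G` is *extremely amenable* if every continuous action of `G`
on a nonempty compact Hausdorff space has a `G`-fixed point. -/
def ExtremelyAmenable (G : Type) [Group G] [TopologicalSpace G] : Prop :=
  ∀ (X : Type) [TopologicalSpace X] [CompactSpace X] [T2Space X] [Nonempty X]
    [MulAction G X] [ContinuousSMul G X], ∃ x : X, ∀ g : G, g • x = x

/-- The pair `(G, H)` is *relatively extremely amenable* if every continuous action of `G`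
on a nonempty compact Hausdorff space has a point fixed by every element of `H`. -/
def RelativelyExtremelyAmenable (G : Type) [Group G] [TopologicalSpace G] (H : Subgroup G) :
    Prop :=
  ∀ (X : Type) [TopologicalSpace X] [CompactSpace X] [T2Space X] [Nonempty X]
    [MulAction G X] [ContinuousSMul G X], ∃ x : X, ∀ h ∈ H, h • x = x
/-- A `G`-space `X` is *minimal* if `X` is nonempty and the only closed `G`-invariant
subsets of `X` are `∅` and `X`. -/
def IsMinimalSpace (G : Type) (X : Type) [Group G] [TopologicalSpace X] [MulAction G X] :
    Prop :=
  Nonempty X ∧ ∀ S : Set X, IsClosed S → (∀ g : G, ∀ x ∈ S, g • x ∈ S) →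
    S = ∅ ∨ S = Set.univ

/-- A `G`-space `X` is *universal* if every minimal compact Hausdorff `G`-space `Y` is a
continuous `G`-equivariant surjective image of `X`. -/
def IsUniversalSpace (G : Type) [Group G] [TopologicalSpace G] (X : Type)
    [TopologicalSpace X] [MulAction G X] : Prop :=
  ∀ (Y : Type) [TopologicalSpace Y] [CompactSpace Y] [T2Space Y] [MulAction G Y]
    [ContinuousSMul G Y], IsMinimalSpace G Y →
      ∃ f : X → Y, Continuous f ∧ Function.Surjective f ∧
        ∀ (g : G) (x : X), f (g • x) = g • f x

/-- A compact Hausdorff space with a continuous `G`-action (a compact `G`-space). -/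
structure CompactGSpace (G : Type) [Group G] [TopologicalSpace G] : Type 1 where
  carrier : Type
  [ts : TopologicalSpace carrier]
  [cs : CompactSpace carrier]
  [t2 : T2Space carrier]
  [ma : MulAction G carrier]
  [csmul : ContinuousSMul G carrier]

attribute [instance] CompactGSpace.ts CompactGSpace.cs CompactGSpace.t2
  CompactGSpace.ma CompactGSpace.csmul

section Aux

variable {G : Type} [Group G] [TopologicalSpace G]

/-- Data of a compact Hausdorff `G`-flow structure on a nonempty subset of `κ`. -/
structure FlowOn (G : Type) [Group G] [TopologicalSpace G] (κ : Type) : Type where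
  s : Set κ
  ts : TopologicalSpace s
  ma : MulAction G s
  cs : @CompactSpace s ts
  t2 : @T2Space s ts
  csmul : @ContinuousSMul G s ma.toSMul _ ts
  ne : Nonempty s

namespace FlowOn

variable {κ : Type} (i : FlowOn G κ)

instance : TopologicalSpace i.s := i.ts
instance : MulAction G i.s := i.ma
instance : CompactSpace i.s := i.cs
instance : T2Space i.s := i.t2
instance : ContinuousSMul G i.s := i.csmul
instance : Nonempty i.s := i.ne

end FlowOn

/-- In a minimal flow, every orbit is dense. -/
lemma dense_orbit {X : Type} [TopologicalSpace X] [MulAction G X] [ContinuousSMul G X]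
    (hmin : IsMinimalSpace G X) (x : X) : Dense (Set.range (fun g : G => g • x)) := by
  have hsub : closure (Set.range (fun g : G => g • x)) = Set.univ := by
    have hinv : ∀ g : G, ∀ y ∈ closure (Set.range (fun g : G => g • x)),
        g • y ∈ closure (Set.range (fun g : G => g • x)) := by
      intro g y hy
      have hmaps : Set.MapsTo (fun z : X => g • z) (Set.range (fun g : G => g • x))
          (Set.range (fun g : G => g • x)) := by
        rintro _ ⟨g', rfl⟩
        exact ⟨g * g', mul_smul g g' x⟩
      exact hmaps.closure (continuous_const_smul g) hy
    rcases hmin.2 (closure (Set.range (fun g : G => g • x))) isClosed_closure hinv with h | h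
    · exfalso
      have h1 : (1 : G) • x ∈ closure (Set.range (fun g : G => g • x)) :=
        subset_closure ⟨1, rfl⟩
      rw [h] at h1
      exact h1
    · exact h
  exact dense_iff_closure_eq.mpr hsub

/-- A minimal compact Hausdorff flow injects into `Set (Set G)`. -/
lemma exists_injection_of_minimal {Y : Type} [TopologicalSpace Y] [CompactSpace Y]
    [T2Space Y] [MulAction G Y] [ContinuousSMul G Y] (hmin : IsMinimalSpace G Y) :
    ∃ j : Y → Set (Set G), Function.Injective j := by
  obtain ⟨y₀⟩ := hmin.1
  refine ⟨fun y => {A : Set G | y ∈ closure ((fun g : G => g • y₀) '' A)}, ?_⟩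
  intro y z hyz
  by_contra hne
  -- find an open set U with y ∈ U and z ∉ closure U, using regularity
  obtain ⟨C, hCnhds, hCclosed, hCsub⟩ :
      ∃ C ∈ nhds y, IsClosed C ∧ C ⊆ {z}ᶜ := by
    have : ({z}ᶜ : Set Y) ∈ nhds y :=
      (isOpen_compl_singleton).mem_nhds (by simpa using hne)
    obtain ⟨C, ⟨hC1, hC2⟩, hC3⟩ := (closed_nhds_basis y).mem_iff.mp this
    exact ⟨C, hC1, hC2, hC3⟩
  set U := interior C with hU
  have hUopen : IsOpen U := isOpen_interior
  have hyU : y ∈ U := mem_interior_iff_mem_nhds.mpr hCnhds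
  have hzU : z ∉ closure U := by
    intro hz
    have : closure U ⊆ C := by
      calc closure U ⊆ closure C := closure_mono interior_subset
      _ = C := hCclosed.closure_eq
    exact hCsub (this hz) rfl
  set A : Set G := {g : G | g • y₀ ∈ U} with hA
  have hmemy : A ∈ {A : Set G | y ∈ closure ((fun g : G => g • y₀) '' A)} := by
    have hdense := dense_orbit hmin y₀
    have h1 : U ⊆ closure (U ∩ Set.range (fun g : G => g • y₀)) :=
      hdense.open_subset_closure_inter hUopen
    have h2 : U ∩ Set.range (fun g : G => g • y₀) ⊆ (fun g : G => g • y₀) '' A := by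
      rintro p ⟨hpU, g, rfl⟩
      exact ⟨g, hpU, rfl⟩
    exact closure_mono h2 (h1 hyU)
  have hmemz : A ∉ {A : Set G | z ∈ closure ((fun g : G => g • y₀) '' A)} := by
    intro hz
    apply hzU
    refine closure_mono ?_ hz
    rintro _ ⟨g, hg, rfl⟩
    exact hg
  apply hmemz
  have heq : ({A : Set G | y ∈ closure ((fun g : G => g • y₀) '' A)} : Set (Set G)) =
      {A : Set G | z ∈ closure ((fun g : G => g • y₀) '' A)} := hyz
  rw [← heq]
  exact hmemy

end Aux

/-- The pair `(G, H)` is relatively extremely amenable if and only if there is a universal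
compact Hausdorff `G`-space `T` with a point `t₀` fixed by every element of `H`. -/
theorem relativelyExtremelyAmenable_iff_exists_universal_fixed_point
    (G : Type) [Group G] [TopologicalSpace G] [IsTopologicalGroup G] (H : Subgroup G) :
    RelativelyExtremelyAmenable G H ↔
      ∃ (T : CompactGSpace G) (t₀ : T.carrier),
        IsUniversalSpace G T.carrier ∧ ∀ h ∈ H, h • t₀ = t₀ := by
  classical
  constructor
  · -- forward: build the universal space as the product of all flows on subsets of Set (Set G)
    intro hrea
    let I := FlowOn G (Set (Set G))
    let T : CompactGSpace G := ⟨∀ i : I, i.s⟩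
    obtain ⟨t₀, ht₀⟩ := hrea (∀ i : I, i.s)
    refine ⟨T, t₀, ?_, ht₀⟩
    intro Y _ _ _ _ _ hmin
    obtain ⟨j, hj⟩ := exists_injection_of_minimal hmin
    let e : Y ≃ Set.range j := Equiv.ofInjective j hj
    letI tsS : TopologicalSpace (Set.range j) :=
      TopologicalSpace.induced (e.symm : Set.range j → Y) inferInstance
    have hind : Topology.IsInducing (e.symm : Set.range j → Y) := ⟨rfl⟩
    let hom : (Set.range j) ≃ₜ Y := Equiv.toHomeomorphOfIsInducing e.symm hind
    letI maS : MulAction G (Set.range j) :=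
      { smul := fun g x => e (g • e.symm x)
        one_smul := fun x => by
          show e ((1 : G) • e.symm x) = x
          rw [one_smul]; exact e.apply_symm_apply x
        mul_smul := fun g g' x => by
          show e ((g * g') • e.symm x) = e (g • e.symm (e (g' • e.symm x)))
          rw [mul_smul, e.symm_apply_apply] }
    have hsmul : ∀ (g : G) (x : Set.range j), g • x = hom.symm (g • hom x) := fun _ _ => rfl
    haveI csS : ContinuousSMul G (Set.range j) := by
      refine ⟨?_⟩
      have heq : (fun p : G × (Set.range j) => p.1 • p.2) =
          fun p : G × (Set.range j) => hom.symm (p.1 • hom p.2) := rfl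
      rw [heq]
      exact hom.symm.continuous.comp (continuous_fst.smul (hom.continuous.comp continuous_snd))
    let i : I := ⟨Set.range j, tsS, maS, hom.symm.compactSpace, hom.symm.t2Space, csS,
      hmin.1.map e⟩
    refine ⟨fun t => hom (t i), hom.continuous.comp (continuous_apply i), ?_, ?_⟩
    · intro y
      refine ⟨Function.update (fun i' : I => Classical.choice i'.ne) i (hom.symm y), ?_⟩
      simp
    · intro g t
      show hom (g • t i) = g • hom (t i)
      rw [hsmul g (t i)]
      exact hom.apply_symm_apply _
  · -- backward: find a minimal subflow of any compact G-space and push the fixed point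
    rintro ⟨T, t₀, huniv, hfix⟩
    intro X _ _ _ _ _ _
    set F : Set (Set X) := {S | S.Nonempty ∧ IsClosed S ∧ ∀ g : G, ∀ x ∈ S, g • x ∈ S} with hF
    have hchainlb : ∀ c ⊆ F, IsChain (· ⊆ ·) c → c.Nonempty →
        ∃ lb ∈ F, ∀ s ∈ c, lb ⊆ s := by
      intro c hcF hchain hcne
      refine ⟨⋂₀ c, ⟨?_, ?_, ?_⟩, fun s hs => Set.sInter_subset_of_mem hs⟩
      · haveI : Nonempty c := hcne.to_subtype
        have hdir : DirectedOn (· ⊇ ·) c := by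
          intro a ha b hb
          rcases eq_or_ne a b with rfl | hne
          · exact ⟨a, ha, Set.Subset.rfl, Set.Subset.rfl⟩
          · rcases hchain ha hb hne with hab | hab
            · exact ⟨a, ha, Set.Subset.rfl, hab⟩
            · exact ⟨b, hb, hab, Set.Subset.rfl⟩
        exact IsCompact.nonempty_sInter_of_directed_nonempty_isCompact_isClosed
          hdir (fun U hU => (hcF hU).1)
          (fun U hU => (hcF hU).2.1.isCompact) (fun U hU => (hcF hU).2.1)
      · exact isClosed_sInter fun U hU => (hcF hU).2.1
      · intro g x hx U hU
        exact (hcF hU).2.2 g x (hx U hU)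
    obtain ⟨m, -, hmF, hmmin⟩ :
        ∃ m, m ⊆ Set.univ ∧ m ∈ F ∧ ∀ a ∈ F, a ≤ m → m ≤ a := by
      obtain ⟨m, hm1, hm2⟩ := zorn_superset_nonempty F hchainlb Set.univ
        ⟨Set.univ_nonempty, isClosed_univ, fun _ _ _ => Set.mem_univ _⟩
      exact ⟨m, hm1, hm2.1, fun a ha hle => hm2.2 ha hle⟩
    obtain ⟨hm_ne, hm_cl, hm_inv⟩ := hmF
    letI : MulAction G m :=
      { smul := fun g x => ⟨g • (x : X), hm_inv g x x.2⟩
        one_smul := fun x => Subtype.ext (one_smul G (x : X))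
        mul_smul := fun g g' x => Subtype.ext (mul_smul g g' (x : X)) }
    haveI : CompactSpace m := isCompact_iff_compactSpace.mp hm_cl.isCompact
    haveI : ContinuousSMul G m := by
      refine ⟨?_⟩
      apply Continuous.subtype_mk
      exact continuous_fst.smul (continuous_subtype_val.comp continuous_snd)
    have hmin : IsMinimalSpace G m := by
      refine ⟨hm_ne.to_subtype, ?_⟩
      intro S hScl hSinv
      rcases S.eq_empty_or_nonempty with h | h
      · exact Or.inl h
      · right
        have hSF : Subtype.val '' S ∈ F := by
          refine ⟨h.image _, ?_, ?_⟩
          · exact hm_cl.isClosedEmbedding_subtypeVal.isClosedMap _ hScl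
          · rintro g _ ⟨y, hyS, rfl⟩
            exact ⟨g • y, hSinv g y hyS, rfl⟩
        have hsub : Subtype.val '' S ⊆ m := by
          rintro _ ⟨y, -, rfl⟩; exact y.2
        have := hmmin _ hSF hsub
        ext x
        simp only [Set.mem_univ, iff_true]
        obtain ⟨y, hyS, hyx⟩ := this x.2
        rwa [Subtype.val_injective hyx] at hyS
    obtain ⟨f, -, -, hfequiv⟩ := huniv m hmin
    refine ⟨(f t₀ : X), fun h hH => ?_⟩
    have h1 : f (h • t₀) = h • f t₀ := hfequiv h t₀
    rw [hfix h hH] at h1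
    exact congrArg Subtype.val h1.symm
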